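/- The polynomial identity ∑_{j=0}^{k-1} ∑_{1≤i_1<...<i_j≤r} x_{i_1}⋯x_{i_j} ∏_{ℓ∉{i_1,...,i_j}} (1 - x_ℓ) = 1 - ∑_{j=k}^{r} (-1)^{j-k} C(j-1, k-1) e_j(x_1,...,x_r) holds, where e_j denotes the j-th elementary symmetric polynomial and the j = 0 term on the left is ∏_{ℓ=1}^r (1 - x_ℓ). -/

import Mathlib

open Finset

lemma aux_binom {R : Type*} [CommRing R] (d : ℕ) : ∀ e : ℕ,
    ∑ j ∈ Icc (e+1) (e+d+1), (-1:R)^(e+d+1-j) * ((e+d+1).choose j)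
      = (-1)^d * ((e+d).choose e) := by
  induction d with
  | zero => intro e; simp
  | succ d ih =>
    intro e
    have hins : Icc (e+1) (e+(d+1)+1) = insert (e+1) (Icc (e+1+1) (e+1+d+1)) := by
      ext a; simp [Finset.mem_Icc, Finset.mem_insert]; omega
    rw [hins, Finset.sum_insert (by simp)]
    have h2 : ∑ j ∈ Icc (e+1+1) (e+1+d+1), (-1:R)^(e+(d+1)+1-j) * ((e+(d+1)+1).choose j)
        = ∑ j ∈ Icc (e+1+1) (e+1+d+1), (-1:R)^(e+1+d+1-j) * ((e+1+d+1).choose j) := by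
      apply Finset.sum_congr rfl; intro j hj; rw [show e+(d+1)+1 = e+1+d+1 by ring]
    rw [h2, ih (e+1)]
    have hpascal : (e+(d+1)+1).choose (e+1) = (e+d+1).choose e + (e+d+1).choose (e+1) := by
      rw [show e+(d+1)+1 = (e+d+1)+1 by ring]
      exact Nat.choose_succ_succ (e+d+1) e
    rw [show e+(d+1)+1-(e+1) = d+1 by omega, hpascal]
    have : e+1+d = e+d+1 := by ring
    rw [this]
    push_cast
    ring_nf

lemma binom_tail {R : Type*} [CommRing R] {k m : ℕ} (hk : 1 ≤ k) (hkm : k ≤ m) :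
    ∑ j ∈ Icc k m, (-1:R)^(m-j) * (m.choose j) = (-1)^(m-k) * ((m-1).choose (k-1)) := by
  obtain ⟨e, rfl⟩ : ∃ e, k = e + 1 := ⟨k-1, by omega⟩
  obtain ⟨d, rfl⟩ : ∃ d, m = e + d + 1 := ⟨m - e - 1, by omega⟩
  simpa [show e+d+1-(e+1) = d by omega] using aux_binom d e

theorem sum_indicator_eq_one_sub_esymm {R : Type*} [CommRing R] (r k : ℕ)
    (hk : 2 ≤ k) (hkr : k ≤ r) (x : Fin r → R) :
    ∑ j ∈ Finset.range k, ∑ t ∈ Finset.univ.powersetCard j,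
        (∏ i ∈ t, x i) * ∏ ℓ ∈ tᶜ, (1 - x ℓ)
      = 1 - ∑ j ∈ Finset.Icc k r, (-1 : R) ^ (j - k) * ((j - 1).choose (k - 1)) *
          ∑ t ∈ Finset.univ.powersetCard j, ∏ i ∈ t, x i := by
  classical
  set F : Finset (Fin r) → R := fun t => (∏ i ∈ t, x i) * ∏ ℓ ∈ tᶜ, (1 - x ℓ) with hF
  -- total over all subsets = 1
  have hsplit : ∑ t ∈ (Finset.univ : Finset (Fin r)).powerset, F t
      = ∑ j ∈ Finset.range (r+1), ∑ t ∈ Finset.univ.powersetCard j, F t := by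
    rw [Finset.sum_powerset]
    simp [Finset.card_univ]
  have htot : ∑ t ∈ (Finset.univ : Finset (Fin r)).powerset, F t = 1 := by
    rw [Finset.powerset_univ]
    calc ∑ t : Finset (Fin r), F t
        = ∏ i, (x i + (1 - x i)) := (Fintype.prod_add x (fun i => 1 - x i)).symm
      _ = 1 := by simp
  have h2 : (∑ j ∈ Finset.range k, ∑ t ∈ Finset.univ.powersetCard j, F t)
      + ∑ j ∈ Finset.Icc k r, ∑ t ∈ Finset.univ.powersetCard j, F t = 1 := by
    rw [← Finset.Ico_add_one_right_eq_Icc,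
      Finset.sum_range_add_sum_Ico _ (by omega : k ≤ r+1), ← hsplit, htot]
  -- the tail
  set B : Finset (Finset (Fin r)) :=
    (Finset.univ : Finset (Fin r)).powerset.filter (fun t => k ≤ t.card) with hB
  have hcard_le : ∀ t : Finset (Fin r), t.card ≤ r := by
    intro t; simpa using Finset.card_le_univ t
  have hfiber : ∀ j, j ∈ Finset.Icc k r →
      Finset.univ.powersetCard j = B.filter (fun t => t.card = j) := by
    intro j hj
    rw [Finset.mem_Icc] at hj
    ext t
    simp only [hB, Finset.mem_powersetCard, Finset.mem_filter, Finset.mem_powerset]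
    constructor
    · rintro ⟨hsub, hc⟩; exact ⟨⟨hsub, by omega⟩, hc⟩
    · rintro ⟨⟨hsub, _⟩, hc⟩; exact ⟨hsub, hc⟩
  have htail1 : ∑ j ∈ Finset.Icc k r, ∑ t ∈ Finset.univ.powersetCard j, F t
      = ∑ t ∈ B, F t := by
    rw [Finset.sum_congr rfl (fun j hj => by rw [hfiber j hj])]
    exact Finset.sum_fiberwise_of_maps_to
      (fun t ht => by
        rw [hB, Finset.mem_filter] at ht
        rw [Finset.mem_Icc]; exact ⟨ht.2, hcard_le t⟩) F
  -- expand each F t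
  have hprodneg : ∀ s : Finset (Fin r), ∏ i ∈ s, (-x i) = (-1:R)^(s.card) * ∏ i ∈ s, x i := by
    intro s
    calc ∏ i ∈ s, (-x i) = ∏ i ∈ s, ((-1) * x i) := by simp
      _ = (∏ _i ∈ s, (-1:R)) * ∏ i ∈ s, x i := Finset.prod_mul_distrib
      _ = (-1:R)^(s.card) * ∏ i ∈ s, x i := by rw [Finset.prod_const]
  have hexpand : ∀ t : Finset (Fin r), F t
      = ∑ s ∈ tᶜ.powerset, (-1:R)^(s.card) * ((∏ i ∈ t, x i) * ∏ i ∈ s, x i) := by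
    intro t
    have : ∏ ℓ ∈ tᶜ, (1 - x ℓ) = ∏ ℓ ∈ tᶜ, ((-x ℓ) + 1) := by
      apply Finset.prod_congr rfl; intros; ring
    rw [hF]
    simp only [this, Finset.prod_add, Finset.prod_const_one, mul_one,
      Finset.mul_sum]
    apply Finset.sum_congr rfl
    intro s hs
    rw [hprodneg s]
    ring
  have htail2 : ∑ t ∈ B, F t
      = ∑ p ∈ B.sigma (fun t => tᶜ.powerset),
          (-1:R)^(p.2.card) * ((∏ i ∈ p.1, x i) * ∏ i ∈ p.2, x i) := by
    rw [Finset.sum_congr rfl (fun t ht => hexpand t), Finset.sum_sigma']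
  -- reindex
  have htail3 : ∑ p ∈ B.sigma (fun t => tᶜ.powerset),
          (-1:R)^(p.2.card) * ((∏ i ∈ p.1, x i) * ∏ i ∈ p.2, x i)
      = ∑ p ∈ (Finset.univ : Finset (Fin r)).powerset.sigma
            (fun u => u.powerset.filter (fun t => k ≤ t.card)),
          (-1:R)^(p.1.card - p.2.card) * ∏ i ∈ p.1, x i := by
    apply Finset.sum_nbij' (fun p => ⟨p.1 ∪ p.2, p.1⟩) (fun p => ⟨p.2, p.1 \ p.2⟩)
    · rintro ⟨t, s⟩ hp
      simp only [Finset.mem_sigma, hB, Finset.mem_filter, Finset.mem_powerset] at hp ⊢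
      exact ⟨Finset.subset_univ _, Finset.subset_union_left, hp.1.2⟩
    · rintro ⟨u, t⟩ hp
      simp only [Finset.mem_sigma, hB, Finset.mem_filter, Finset.mem_powerset] at hp ⊢
      refine ⟨⟨Finset.subset_univ _, hp.2.2⟩, ?_⟩
      intro a ha
      rw [Finset.mem_sdiff] at ha
      rw [Finset.mem_compl]
      exact ha.2
    · rintro ⟨t, s⟩ hp
      simp only [Finset.mem_sigma, hB, Finset.mem_filter, Finset.mem_powerset] at hp
      have hdisj : Disjoint t s := by
        rw [Finset.disjoint_right]
        intro a ha
        have := hp.2 ha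
        rw [Finset.mem_compl] at this
        exact this
      simp only [Sigma.mk.inj_iff, heq_eq_eq]
      exact ⟨trivial, Finset.union_sdiff_cancel_left hdisj⟩
    · rintro ⟨u, t⟩ hp
      simp only [Finset.mem_sigma, Finset.mem_filter, Finset.mem_powerset] at hp
      simp only [Sigma.mk.inj_iff, heq_eq_eq]
      exact ⟨Finset.union_sdiff_of_subset hp.2.1, trivial⟩
    · rintro ⟨t, s⟩ hp
      simp only [Finset.mem_sigma, hB, Finset.mem_filter, Finset.mem_powerset] at hp
      have hdisj : Disjoint t s := by
        rw [Finset.disjoint_right]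
        intro a ha
        have := hp.2 ha
        rw [Finset.mem_compl] at this
        exact this
      have hc : (t ∪ s).card = t.card + s.card := Finset.card_union_of_disjoint hdisj
      have : (t ∪ s).card - t.card = s.card := by omega
      rw [this, Finset.prod_union hdisj]
  -- inner coefficient sum
  set c : ℕ → R := fun m => if k ≤ m then (-1:R)^(m-k) * ((m-1).choose (k-1)) else 0 with hc
  have hcoeff : ∀ u : Finset (Fin r),
      ∑ t ∈ u.powerset.filter (fun t => k ≤ t.card), (-1:R)^(u.card - t.card) = c u.card := by
    intro u
    have hfib : ∑ j ∈ Finset.Icc k u.card,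
        ∑ t ∈ (u.powerset.filter (fun t => k ≤ t.card)).filter (fun t => t.card = j),
          (-1:R)^(u.card - t.card)
        = ∑ t ∈ u.powerset.filter (fun t => k ≤ t.card), (-1:R)^(u.card - t.card) :=
      Finset.sum_fiberwise_of_maps_to
        (fun t ht => by
          rw [Finset.mem_filter, Finset.mem_powerset] at ht
          rw [Finset.mem_Icc]
          exact ⟨ht.2, Finset.card_le_card ht.1⟩) _
    rw [← hfib]
    by_cases hku : k ≤ u.card
    · have : ∀ j ∈ Finset.Icc k u.card,
          ∑ t ∈ (u.powerset.filter (fun t => k ≤ t.card)).filter (fun t => t.card = j),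
            (-1:R)^(u.card - t.card) = (-1:R)^(u.card - j) * ((u.card).choose j) := by
        intro j hj
        rw [Finset.mem_Icc] at hj
        have hset : (u.powerset.filter (fun t => k ≤ t.card)).filter (fun t => t.card = j)
            = u.powersetCard j := by
          ext t
          simp only [Finset.mem_filter, Finset.mem_powerset, Finset.mem_powersetCard]
          constructor
          · rintro ⟨⟨h1, _⟩, h3⟩; exact ⟨h1, h3⟩
          · rintro ⟨h1, h3⟩; exact ⟨⟨h1, by omega⟩, h3⟩
        rw [hset]
        calc ∑ t ∈ u.powersetCard j, (-1:R)^(u.card - t.card)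
            = ∑ _t ∈ u.powersetCard j, (-1:R)^(u.card - j) :=
              Finset.sum_congr rfl (fun t ht => by
                rw [(Finset.mem_powersetCard.mp ht).2])
          _ = (-1:R)^(u.card - j) * ((u.card).choose j) := by
              rw [Finset.sum_const, Finset.card_powersetCard, nsmul_eq_mul, mul_comm]
      rw [Finset.sum_congr rfl this, binom_tail (by omega) hku, hc]
      simp [hku]
    · rw [hc]
      have : Finset.Icc k u.card = ∅ := by
        rw [Finset.Icc_eq_empty_iff]; omega
      rw [this]
      simp [hku]
  -- regroup
  have htail4 : ∑ p ∈ (Finset.univ : Finset (Fin r)).powerset.sigma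
            (fun u => u.powerset.filter (fun t => k ≤ t.card)),
          (-1:R)^(p.1.card - p.2.card) * ∏ i ∈ p.1, x i
      = ∑ u ∈ (Finset.univ : Finset (Fin r)).powerset, c u.card * ∏ i ∈ u, x i := by
    rw [Finset.sum_sigma]
    apply Finset.sum_congr rfl
    intro u hu
    dsimp only
    rw [← Finset.sum_mul, hcoeff u]
  have htail5 : ∑ u ∈ (Finset.univ : Finset (Fin r)).powerset, c u.card * ∏ i ∈ u, x i
      = ∑ u ∈ B, c u.card * ∏ i ∈ u, x i := by
    apply (Finset.sum_subset (Finset.filter_subset _ _) _).symm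
    intro u hu hnu
    have : ¬ k ≤ u.card := fun h => hnu (Finset.mem_filter.mpr ⟨hu, h⟩)
    rw [hc]
    simp [this]
  have htail6 : ∑ u ∈ B, c u.card * ∏ i ∈ u, x i
      = ∑ j ∈ Finset.Icc k r, (-1 : R) ^ (j - k) * ((j - 1).choose (k - 1)) *
          ∑ t ∈ Finset.univ.powersetCard j, ∏ i ∈ t, x i := by
    have hfw := Finset.sum_fiberwise_of_maps_to (s := B) (t := Finset.Icc k r)
      (g := fun t => t.card)
      (fun t ht => by
        rw [hB, Finset.mem_filter] at ht
        rw [Finset.mem_Icc]; exact ⟨ht.2, hcard_le t⟩)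
      (fun u => c u.card * ∏ i ∈ u, x i)
    rw [← hfw]
    apply Finset.sum_congr rfl
    intro j hj
    rw [← hfiber j hj, Finset.mul_sum]
    apply Finset.sum_congr rfl
    intro t ht
    rw [Finset.mem_powersetCard] at ht
    rw [ht.2, hc]
    have hkj : k ≤ j := (Finset.mem_Icc.mp hj).1
    simp [hkj]
  have key : ∑ j ∈ Finset.Icc k r, ∑ t ∈ Finset.univ.powersetCard j, F t
      = ∑ j ∈ Finset.Icc k r, (-1 : R) ^ (j - k) * ((j - 1).choose (k - 1)) *
          ∑ t ∈ Finset.univ.powersetCard j, ∏ i ∈ t, x i := by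
    rw [htail1, htail2, htail3, htail4, htail5, htail6]
  rw [key] at h2
  have hLHS : (∑ j ∈ Finset.range k, ∑ t ∈ Finset.univ.powersetCard j,
      (∏ i ∈ t, x i) * ∏ ℓ ∈ tᶜ, (1 - x ℓ))
      = ∑ j ∈ Finset.range k, ∑ t ∈ Finset.univ.powersetCard j, F t := rfl
  rw [hLHS]
  linear_combination h2
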